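/- arXiv:2309.13491 — 4 statements merged into one kernel-verified Lean document; each statement's English description precedes it below -/
import Mathlib

section
/- Let G be a topological group and H a closed subgroup of G. If X is an H-space, then the H-orbit space X/H is homeomorphic to a retract of the H-orbit space (G ×_H X)/H; concretely, the map r : (G ×_H X)/H → (G ×_H X)/H sending the H-orbit of [g, x] to the H-orbit of [e, x] is a well-defined continuous retraction onto the image of the induced embedding X/H ↪ (G ×_H X)/H. -/
/-- The relation on `G × X` whose quotient is the twisted product `G ×_H X`. -/
def twRel {G : Type*} [Group G] (H : Subgroup G) (X : Type*) [MulAction H X] :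
    G × X → G × X → Prop :=
  fun p q => ∃ h : H, q.1 = p.1 * (h : G)⁻¹ ∧ q.2 = h • p.2

/-- The `G`-action on the twisted product `G ×_H X` by left translation in the
first coordinate: `g' • [g, x] = [g' g, x]`. -/
def gAct {G : Type*} [Group G] (H : Subgroup G) (X : Type*) [MulAction H X] (g' : G) :
    Quot (twRel H X) → Quot (twRel H X) :=
  Quot.map (fun p => (g' * p.1, p.2)) (by
    rintro ⟨g, x⟩ ⟨g₁, x₁⟩ ⟨h, h1, h2⟩
    exact ⟨h, by simp only at h1 h2 ⊢; rw [h1, mul_assoc], h2⟩)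

/-- The `H`-orbit relation on the `H`-space `X`. -/
def orbRelX {G : Type*} [Group G] (H : Subgroup G) (X : Type*) [MulAction H X] :
    X → X → Prop :=
  fun x y => ∃ h : H, y = h • x

/-- The `H`-orbit relation on the twisted product `G ×_H X`, where `H` acts by
restriction of the `G`-action `g' • [g, x] = [g' g, x]`. -/
def orbRelH {G : Type*} [Group G] (H : Subgroup G) (X : Type*) [MulAction H X] :
    Quot (twRel H X) → Quot (twRel H X) → Prop :=
  fun t t' => ∃ h : H, t' = gAct H X (h : G) t

/-- Auxiliary: the embedding `X/H → (G ×_H X)/H` induced by `x ↦ [e, x]`. -/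
def stmt6ι {G : Type*} [Group G] (X : Type*) (H : Subgroup G) [MulAction H X] :
    Quot (orbRelX H X) → Quot (orbRelH H X) :=
  Quot.lift (fun x => Quot.mk (orbRelH H X) (Quot.mk (twRel H X) ((1 : G), x)))
    (by
      rintro x y ⟨h, rfl⟩
      have e1 : Quot.mk (orbRelH H X) (Quot.mk (twRel H X) ((1 : G), x))
          = Quot.mk (orbRelH H X) (Quot.mk (twRel H X) ((h : G), x)) := by
        refine Quot.sound ⟨h, ?_⟩
        show Quot.mk _ ((h : G), x) = Quot.mk _ ((h : G) * 1, x)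
        rw [mul_one]
      have e2 : Quot.mk (twRel H X) ((h : G), x)
          = Quot.mk (twRel H X) ((1 : G), h • x) :=
        Quot.sound ⟨h, by simp, rfl⟩
      exact e1.trans (congrArg _ e2))

/-- Auxiliary: the projection `(G ×_H X)/H → X/H` induced by `[g, x] ↦ x`. -/
def stmt6ρ {G : Type*} [Group G] (X : Type*) (H : Subgroup G) [MulAction H X] :
    Quot (orbRelH H X) → Quot (orbRelX H X) :=
  Quot.lift
    (Quot.lift (fun p : G × X => Quot.mk (orbRelX H X) p.2)
      (by rintro p q ⟨h, _, h2⟩; exact Quot.sound ⟨h, h2⟩))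
    (by
      rintro t t' ⟨h, rfl⟩
      induction t using Quot.ind with
      | _ p => rfl)

/-- For a closed subgroup `H ≤ G` and an `H`-space `X`, the orbit space
`X/H` embeds into `(G ×_H X)/H` via the map induced by `x ↦ [e, x]`, and the map
`r : (G ×_H X)/H → (G ×_H X)/H` sending the `H`-orbit of `[g, x]` to the `H`-orbit
of `[e, x]` is a well-defined continuous retraction onto the image of this
embedding; in particular `X/H` is homeomorphic to a retract of `(G ×_H X)/H`. -/
theorem stmt6 {G : Type*} [Group G] [TopologicalSpace G] [IsTopologicalGroup G]
    (X : Type*) [TopologicalSpace X] (H : Subgroup G) (hH : IsClosed (H : Set G))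
    [MulAction H X] [ContinuousSMul H X] :
    ∃ ιbar : Quot (orbRelX H X) → Quot (orbRelH H X),
      (∀ x : X, ιbar (Quot.mk (orbRelX H X) x)
          = Quot.mk (orbRelH H X) (Quot.mk (twRel H X) ((1 : G), x))) ∧
      Topology.IsEmbedding ιbar ∧
      ∃ r : Quot (orbRelH H X) → Quot (orbRelH H X),
        (∀ p : G × X, r (Quot.mk (orbRelH H X) (Quot.mk (twRel H X) p))
            = Quot.mk (orbRelH H X) (Quot.mk (twRel H X) ((1 : G), p.2))) ∧
        Continuous r ∧
        Set.range r = Set.range ιbar ∧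
        (∀ y ∈ Set.range ιbar, r y = y) := by
  set ι := stmt6ι X H
  set ρ := stmt6ρ X H
  have hcι : Continuous ι := by
    apply continuous_quot_lift
    exact (continuous_quot_mk.comp continuous_quot_mk).comp
      (continuous_const.prodMk continuous_id)
  have hcρ : Continuous ρ := by
    apply continuous_quot_lift
    apply continuous_quot_lift
    exact continuous_quot_mk.comp continuous_snd
  have hli : Function.LeftInverse ρ ι := by
    intro q
    induction q using Quot.ind with
    | _ x => rfl
  refine ⟨ι, fun x => rfl, hli.isEmbedding hcρ hcι, ι ∘ ρ, fun p => rfl,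
    hcι.comp hcρ, ?_, ?_⟩
  · ext y
    constructor
    · rintro ⟨z, rfl⟩; exact ⟨ρ z, rfl⟩
    · rintro ⟨z, rfl⟩; exact ⟨ι z, by simp [Function.comp, hli z]⟩
  · rintro y ⟨z, rfl⟩
    show ι (ρ (ι z)) = ι z
    rw [hli z]
end

section
/- Let G be a topological group and K any closed subgroup of G. If S is a K-space, then the G-orbit space (G ×_K S)/G is homeomorphic to a retract of the K-orbit space (G ×_K S)/K. -/
/-- The `G`-orbit relation on the twisted product `G ×_H X`. -/
def orbRelG {G : Type*} [Group G] (H : Subgroup G) (X : Type*) [MulAction H X] :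
    Quot (twRel H X) → Quot (twRel H X) → Prop :=
  fun t t' => ∃ g : G, t' = gAct H X g t

section Aux

variable {G : Type*} [Group G] {K : Subgroup G} {S : Type*} [MulAction K S]

lemma gAct_mk (g' : G) (p : G × S) :
    gAct K S g' (Quot.mk _ p) = Quot.mk _ (g' * p.1, p.2) := rfl

lemma tw_shift (k : K) (s : S) :
    Quot.mk (twRel K S) ((k : G), s) = Quot.mk (twRel K S) (1, k • s) :=
  Quot.sound ⟨k, by simp, rfl⟩

lemma orbH_shift (k : K) (s : S) :
    Quot.mk (orbRelH K S) (Quot.mk (twRel K S) (1, s)) =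
      Quot.mk (orbRelH K S) (Quot.mk (twRel K S) (1, k • s)) := by
  rw [← tw_shift k s]
  exact Quot.sound ⟨k, by rw [gAct_mk]; simp⟩

/-- The retraction on the `K`-orbit space, sending the class of `[g, s]` to the
class of `[1, s]`. -/
def rmap : Quot (orbRelH K S) → Quot (orbRelH K S) :=
  Quot.lift
    (Quot.lift (fun p => Quot.mk (orbRelH K S) (Quot.mk (twRel K S) (1, p.2)))
      (by
        rintro ⟨g, s⟩ ⟨g', s'⟩ ⟨k, h1, h2⟩
        simp only at h2 ⊢
        rw [h2]
        exact orbH_shift k s))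
    (by
      rintro a b ⟨k, hb⟩
      subst hb
      induction a using Quot.ind with
      | _ p => rfl)

lemma rmap_mk (p : G × S) :
    rmap (Quot.mk (orbRelH K S) (Quot.mk (twRel K S) p)) =
      Quot.mk (orbRelH K S) (Quot.mk (twRel K S) (1, p.2)) := rfl

lemma rmap_idem (t : Quot (orbRelH K S)) : rmap (rmap t) = rmap t := by
  induction t using Quot.ind with
  | _ u => induction u using Quot.ind with
    | _ p => rfl

/-- The natural projection from the `K`-orbit space to the `G`-orbit space. -/
def projHG : Quot (orbRelH K S) → Quot (orbRelG K S) :=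
  Quot.lift (Quot.mk (orbRelG K S)) (by rintro a b ⟨k, e⟩; exact Quot.sound ⟨(k : G), e⟩)

/-- The induced map from the `G`-orbit space back into the `K`-orbit space. -/
def phi0 : Quot (orbRelG K S) → Quot (orbRelH K S) :=
  Quot.lift (fun t => rmap (Quot.mk (orbRelH K S) t))
    (by
      rintro a b ⟨g, hb⟩
      subst hb
      induction a using Quot.ind with
      | _ p => rfl)

lemma phi0_projHG (t : Quot (orbRelH K S)) : phi0 (projHG t) = rmap t := by
  induction t using Quot.ind with
  | _ u => induction u using Quot.ind with
    | _ p => rfl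

end Aux

/-- For a closed subgroup `K ≤ G` and a `K`-space `S`, the `G`-orbit
space `(G ×_K S)/G` is homeomorphic to a retract of the `K`-orbit space
`(G ×_K S)/K`. -/
theorem stmt8 {G : Type*} [Group G] [TopologicalSpace G] [IsTopologicalGroup G]
    (S : Type*) [TopologicalSpace S] (K : Subgroup G) (hK : IsClosed (K : Set G))
    [MulAction K S] [ContinuousSMul K S] :
    ∃ (A : Set (Quot (orbRelH K S))) (r : Quot (orbRelH K S) → Quot (orbRelH K S)),
      Continuous r ∧ Set.range r = A ∧ (∀ a ∈ A, r a = a) ∧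
      Nonempty (Quot (orbRelG K S) ≃ₜ A) := by
  have hrc : Continuous (rmap (K := K) (S := S)) := by
    refine continuous_quot_lift _ (continuous_quot_lift _ ?_)
    exact (continuous_quot_mk.comp continuous_quot_mk).comp
      (continuous_const.prodMk continuous_snd)
  refine ⟨Set.range (rmap (K := K) (S := S)), rmap, hrc, rfl, ?_, ?_⟩
  · rintro a ⟨b, rfl⟩
    exact rmap_idem b
  · -- the homeomorphism
    have hmem : ∀ t : Quot (orbRelG K S), phi0 t ∈ Set.range (rmap (K := K) (S := S)) := by
      intro t
      induction t using Quot.ind with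
      | _ u => exact ⟨Quot.mk _ u, rfl⟩
    refine ⟨{
      toFun := fun t => ⟨phi0 t, hmem t⟩
      invFun := fun a => projHG a.1
      left_inv := ?_
      right_inv := ?_
      continuous_toFun := ?_
      continuous_invFun := ?_ }⟩
    · intro t
      induction t using Quot.ind with
      | _ u =>
        induction u using Quot.ind with
        | _ p =>
          show projHG (rmap (Quot.mk _ (Quot.mk _ p))) = _
          rw [rmap_mk]
          exact Quot.sound ⟨p.1, by rw [gAct_mk]; simp⟩
    · rintro ⟨v, b, rfl⟩
      ext
      show phi0 (projHG (rmap b)) = rmap b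
      rw [phi0_projHG, rmap_idem]
    · refine Continuous.subtype_mk ?_ _
      exact continuous_quot_lift _ (hrc.comp continuous_quot_mk)
    · exact (continuous_quot_lift _ continuous_quot_mk).comp continuous_subtype_val
end

section
/- Let H be a compact subgroup of a topological group G, X a G-space, and S ⊆ X a global H-slice of X (i.e., S = f⁻¹(eH) for some G-map f : X → G/H with G(S) = X). Then the map ξ : G ×_H S → X defined by ξ([g, s]) = g•s is a G-equivariant homeomorphism. -/
/-- The relation on `G × S` (where `S = f⁻¹(eH)` is a global `H`-slice, viewed as a
subtype of `X`) whose quotient is the twisted product `G ×_H S`: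
`(g, s) ~ (g h⁻¹, h • s)` for `h ∈ H`. -/
def twRelSlice {G X : Type*} [Group G] [TopologicalSpace G] [TopologicalSpace X]
    [MulAction G X] (H : Subgroup G) (f : X → G ⧸ H) :
    G × {x : X // f x = ((1 : G) : G ⧸ H)} →
    G × {x : X // f x = ((1 : G) : G ⧸ H)} → Prop :=
  fun p q => ∃ h : H, q.1 = p.1 * (h : G)⁻¹ ∧ (q.2 : X) = (h : G) • (p.2 : X)

/-- Let `H` be a compact subgroup of `G`, `X` a `G`-space and
`S = f⁻¹(eH)` a global `H`-slice of `X`, where `f : X → G/H` is a `G`-map. Then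
`ξ : G ×_H S → X`, `ξ [g, s] = g • s`, is a `G`-equivariant homeomorphism. -/
theorem stmt12 {G X : Type*} [Group G] [TopologicalSpace G] [IsTopologicalGroup G]
    [TopologicalSpace X] [MulAction G X] [ContinuousSMul G X]
    (H : Subgroup G) (hHcpt : IsCompact (H : Set G))
    (f : X → G ⧸ H) (hf : Continuous f)
    (hequiv : ∀ (g : G) (x : X), f (g • x) = g • f x) :
    ∃ ξ : Quot (twRelSlice H f) ≃ₜ X,
      (∀ p, ξ (Quot.mk (twRelSlice H f) p) = p.1 • (p.2 : X)) ∧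
      (∀ (g : G) (p), ξ (Quot.mk (twRelSlice H f) (g * p.1, p.2))
          = g • ξ (Quot.mk (twRelSlice H f) p)) := by
  classical
  set R := twRelSlice H f with hR
  -- smul on the coset space
  have hsmulmk : ∀ (g a : G), g • ((a : G ⧸ H)) = ((g * a : G) : G ⧸ H) := fun g a => rfl
  -- the forward map
  have hwd : ∀ p q, R p q → p.1 • (p.2 : X) = q.1 • (q.2 : X) := by
    rintro ⟨g, s⟩ ⟨g', s'⟩ ⟨h, h1, h2⟩
    simp only at h1 h2 ⊢
    rw [h1, h2, smul_smul, inv_mul_cancel_right]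
  set ξ : Quot R → X := Quot.lift (fun p => p.1 • (p.2 : X)) hwd with hξ
  have hξcont : Continuous ξ :=
    continuous_quot_lift _ (continuous_fst.smul (continuous_subtype_val.comp continuous_snd))
  -- membership lemma for the slice
  have ηmem : ∀ (g : G) (x : X), f x = (g : G ⧸ H) →
      f (g⁻¹ • x) = ((1 : G) : G ⧸ H) := by
    intro g x hx
    rw [hequiv, hx, hsmulmk, inv_mul_cancel]
  -- the inverse map
  set η : X → Quot R := fun x =>
    Quot.mk R ((f x).out, ⟨(f x).out⁻¹ • x, ηmem _ _ (QuotientGroup.out_eq' (f x)).symm⟩)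
    with hη
  -- well-definedness of η with respect to the choice of coset representative
  have ηeq : ∀ (g : G) (x : X) (hx : f x = (g : G ⧸ H)),
      η x = Quot.mk R (g, ⟨g⁻¹ • x, ηmem g x hx⟩) := by
    intro g x hx
    apply Quot.sound
    have hmem : g⁻¹ * (f x).out ∈ H := by
      apply QuotientGroup.eq.mp
      rw [QuotientGroup.out_eq', hx]
    refine ⟨⟨g⁻¹ * (f x).out, hmem⟩, ?_, ?_⟩
    · simp [mul_assoc]
    · simp [smul_smul, mul_assoc]
  -- left inverse
  have hli : ∀ x, ξ (η x) = x := by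
    intro x
    simp only [hη, hξ, Quot.lift_mk]
    simp [smul_smul]
  -- right inverse
  have hri : ∀ q : Quot R, η (ξ q) = q := by
    apply Quot.ind
    rintro ⟨g, s⟩
    have hfx : f (g • (s : X)) = (g : G ⧸ H) := by
      rw [hequiv, s.2, hsmulmk, mul_one]
    rw [show ξ (Quot.mk R (g, s)) = g • (s : X) from rfl, ηeq g (g • (s : X)) hfx]
    congr 1
    refine Prod.ext rfl (Subtype.ext ?_)
    simp [inv_smul_smul]
  -- the pullback space used to prove continuity of η
  set W : Set (G × X) := {p | f p.2 = (p.1 : G ⧸ H)} with hW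
  set π : W → X := fun w => w.1.2 with hπdef
  have hπcont : Continuous π := continuous_snd.comp continuous_subtype_val
  have hπsurj : Function.Surjective π := fun x =>
    ⟨⟨((f x).out, x), (QuotientGroup.out_eq' (f x)).symm⟩, rfl⟩
  have hπopen : IsOpenMap π := by
    intro O hO
    obtain ⟨U, hU, rfl⟩ := isOpen_induced_iff.mp hO
    rw [isOpen_iff_forall_mem_open]
    rintro x ⟨⟨⟨g, x'⟩, hw⟩, hwU, rfl⟩
    simp only [Set.mem_preimage] at hwU
    obtain ⟨A, B, hA, hB, hgA, hxB, hAB⟩ := isOpen_prod_iff.mp hU g x' hwU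
    refine ⟨B ∩ f ⁻¹' (QuotientGroup.mk '' A), ?_, ?_, ?_⟩
    · rintro y ⟨hyB, g', hg'A, hg'⟩
      refine ⟨⟨(g', y), hg'.symm⟩, ?_, rfl⟩
      exact hAB (Set.mk_mem_prod hg'A hyB)
    · exact hB.inter (hf.isOpen_preimage _ (QuotientGroup.isOpenMap_coe A hA))
    · exact ⟨hxB, g, hgA, hw.symm⟩
  have hπq : Topology.IsQuotientMap π := hπopen.isQuotientMap hπcont hπsurj
  have hηcont : Continuous η := by
    rw [hπq.continuous_iff]
    have : η ∘ π = fun w : W =>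
        Quot.mk R (w.1.1, ⟨w.1.1⁻¹ • w.1.2, ηmem _ _ w.2⟩) := by
      funext w
      exact ηeq w.1.1 w.1.2 w.2
    rw [this]
    apply continuous_quot_mk.comp
    exact (continuous_fst.comp continuous_subtype_val).prodMk
      (((continuous_fst.comp continuous_subtype_val).inv.smul
        (continuous_snd.comp continuous_subtype_val)).subtype_mk _)
  refine ⟨⟨⟨ξ, η, hri, hli⟩, hξcont, hηcont⟩, fun p => rfl, fun g p => ?_⟩
  show ξ (Quot.mk R (g * p.1, p.2)) = g • ξ (Quot.mk R p)
  show (g * p.1) • (p.2 : X) = g • (p.1 • (p.2 : X))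
  rw [mul_smul]
end

section
/- Let X be a topological space that is the union of a family of open subsets each of which is an absolute neighborhood extensor for metrizable spaces (ANE). Then X is an ANE for metrizable spaces (Hanner's open union theorem). -/
universe u v

/-- `Y` is an absolute neighborhood extensor for the class of metrizable spaces:
every continuous map from a closed subset of a metrizable space into `Y` extends
continuously over an open neighborhood of that subset. -/
def IsANE (Y : Type v) [TopologicalSpace Y] : Prop :=
  ∀ (Z : Type u) [TopologicalSpace Z] [TopologicalSpace.MetrizableSpace Z]
    (A : Set Z), IsClosed A → ∀ f : A → Y, Continuous f →
    ∃ U : Set Z, IsOpen U ∧ ∃ hAU : A ⊆ U,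
      ∃ F : U → Y, Continuous F ∧ ∀ a : A, F ⟨(a : Z), hAU a.2⟩ = f a


universe w

open scoped Classical
open Set Metric EMetric ENNReal Topology Filter TopologicalSpace




section Prelims

variable {Z : Type*} [TopologicalSpace Z] {X : Type*} [TopologicalSpace X]

/-- Gluing two continuous maps along closed pieces. -/
theorem hanner_glueOn {F G : Z → X} {s c₁ c₂ : Set Z} [DecidablePred (· ∈ c₁)] (hs : s ⊆ c₁ ∪ c₂)
    (h₁ : IsClosed c₁) (h₂ : IsClosed c₂)
    (hF : ContinuousOn F (s ∩ c₁)) (hG : ContinuousOn G (s ∩ c₂))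
    (heq : Set.EqOn F G (s ∩ c₁ ∩ c₂)) :
    ContinuousOn (fun z => if z ∈ c₁ then F z else G z) s := by
  set H : Z → X := fun z => if z ∈ c₁ then F z else G z with hH
  have hHF : Set.EqOn H F (s ∩ c₁) := fun z hz => if_pos hz.2
  have hHG : Set.EqOn H G (s ∩ c₂) := by
    intro z hz
    by_cases h : z ∈ c₁
    · simpa [H, h] using heq ⟨⟨hz.1, h⟩, hz.2⟩
    · simp [H, h]
  intro z hz
  have h1 : ContinuousWithinAt H (s ∩ c₁) z := by
    by_cases hc : z ∈ closure (s ∩ c₁)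
    · have hzc : z ∈ c₁ := by
        have := closure_mono (Set.inter_subset_right (s := s) (t := c₁))
        exact h₁.closure_subset (this hc)
      exact ((hF z ⟨hz, hzc⟩).congr hHF (hHF ⟨hz, hzc⟩))
    · exact continuousWithinAt_of_notMem_closure hc
  have h2 : ContinuousWithinAt H (s ∩ c₂) z := by
    by_cases hc : z ∈ closure (s ∩ c₂)
    · have hzc : z ∈ c₂ := by
        have := closure_mono (Set.inter_subset_right (s := s) (t := c₂))
        exact h₂.closure_subset (this hc)
      exact ((hG z ⟨hz, hzc⟩).congr hHG (hHG ⟨hz, hzc⟩))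
    · exact continuousWithinAt_of_notMem_closure hc
  have := h1.union h2
  refine this.mono ?_
  rw [← Set.inter_union_distrib_left]
  exact fun y hy => ⟨hy, hs hy⟩

end Prelims

section Sep

variable {Z : Type*} [PseudoEMetricSpace Z] {ι : Type*}

/-- A union of uniformly separated closed sets is closed. -/
theorem hanner_isClosed_iUnion_sep {P : ι → Set Z} {δ : ℝ≥0∞} (hδ : 0 < δ)
    (hcl : ∀ i, IsClosed (P i))
    (hsep : ∀ i j, i ≠ j → ∀ x ∈ P i, ∀ y ∈ P j, δ ≤ edist x y) :
    IsClosed (⋃ i, P i) := by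
  refine isClosed_of_closure_subset ?_
  intro z hz
  have hδ2 : (0 : ℝ≥0∞) < δ / 2 := ENNReal.half_pos hδ.ne'
  obtain ⟨y, hy, hyd⟩ := EMetric.mem_closure_iff.1 hz (δ / 2) hδ2
  obtain ⟨i₀, hyi₀⟩ := Set.mem_iUnion.1 hy
  have : z ∈ closure (P i₀) := by
    rw [EMetric.mem_closure_iff]
    intro ε hε
    obtain ⟨y', hy', hy'd⟩ := EMetric.mem_closure_iff.1 hz (min ε (δ / 2)) (lt_min hε hδ2)
    obtain ⟨j, hyj⟩ := Set.mem_iUnion.1 hy'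
    have hij : j = i₀ := by
      by_contra hne
      have h1 : δ ≤ edist y y' := hsep i₀ j (Ne.symm hne) y hyi₀ y' hyj
      have h2 : edist y y' < δ := by
        calc edist y y' ≤ edist y z + edist z y' := edist_triangle _ _ _
        _ < δ / 2 + δ / 2 := by
            exact ENNReal.add_lt_add (by rwa [edist_comm]) (lt_of_lt_of_le hy'd (min_le_right _ _))
        _ = δ := ENNReal.add_halves δ
      exact absurd h1 (not_le.2 h2)
    exact ⟨y', by rwa [hij] at hyj, lt_of_lt_of_le hy'd (min_le_left _ _)⟩
  exact Set.mem_iUnion.2 ⟨i₀, (hcl i₀).closure_subset this⟩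

end Sep



section Rudin

variable {Z : Type u} [PseudoEMetricSpace Z] {ι : Type w}

/-- Centers condition for the Rudin-style construction. -/
def hannerCtr (A : Set Z) (r : ι → ι → Prop) (O : ι → Set Z)
    (Dprev : ∀ m : ℕ, ι → Set Z) (n : ℕ) (i : ι) (x : Z) : Prop :=
  x ∈ O i ∧ (∀ j, r j i → x ∉ O j) ∧
    (∀ y ∈ A, edist x y < 3 * (2⁻¹ : ℝ≥0∞) ^ n → y ∈ O i) ∧
    ∀ m : ℕ, m < n → ∀ j, x ∉ Dprev m j

/-- Rudin-style construction of a σ-discrete refinement. -/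
def hannerRudin (A : Set Z) (r : ι → ι → Prop) (O : ι → Set Z) : ℕ → ι → Set Z :=
  fun n i =>
    {y | y ∈ A ∧ ∃ x, hannerCtr A r O (fun m _j => if h : m < n then hannerRudin A r O m _j else ∅) n i x ∧
      edist x y < (2⁻¹ : ℝ≥0∞) ^ n}
  termination_by n _ => n
  decreasing_by exact h

theorem hannerRudin_def (A : Set Z) (r : ι → ι → Prop) (O : ι → Set Z) (n : ℕ) (i : ι) :
    hannerRudin A r O n i =
      {y | y ∈ A ∧ ∃ x, hannerCtr A r O (hannerRudin A r O) n i x ∧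
        edist x y < (2⁻¹ : ℝ≥0∞) ^ n} := by
  rw [hannerRudin]
  congr 1
  ext y
  simp only [Set.mem_setOf_eq, hannerCtr]
  constructor
  · rintro ⟨hyA, x, ⟨h1, h2, h3, h4⟩, h5⟩
    exact ⟨hyA, x, ⟨h1, h2, h3, fun m hm j => by have := h4 m hm j; rwa [dif_pos hm] at this⟩, h5⟩
  · rintro ⟨hyA, x, ⟨h1, h2, h3, h4⟩, h5⟩
    exact ⟨hyA, x, ⟨h1, h2, h3, fun m hm j => by rw [dif_pos hm]; exact h4 m hm j⟩, h5⟩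

theorem hannerRudin_subset_A (A : Set Z) (r : ι → ι → Prop) (O : ι → Set Z) (n : ℕ) (i : ι) :
    hannerRudin A r O n i ⊆ A := by
  rw [hannerRudin_def]; exact fun y hy => hy.1

theorem hannerRudin_subset (A : Set Z) (r : ι → ι → Prop) (O : ι → Set Z) (n : ℕ) (i : ι) :
    hannerRudin A r O n i ⊆ O i := by
  rw [hannerRudin_def]
  rintro y ⟨hyA, x, hc, hxy⟩
  refine hc.2.2.1 y hyA (lt_of_lt_of_le hxy ?_)
  exact le_mul_of_one_le_left zero_le (by norm_num)

theorem hannerRudin_sep (A : Set Z) (r : ι → ι → Prop) [IsTrichotomous ι r]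
    (O : ι → Set Z) (hOA : ∀ i, O i ⊆ A) (n : ℕ) {i j : ι} (hij : i ≠ j)
    {p q : Z} (hp : p ∈ hannerRudin A r O n i) (hq : q ∈ hannerRudin A r O n j) :
    (2⁻¹ : ℝ≥0∞) ^ n ≤ edist p q := by
  rw [hannerRudin_def] at hp hq
  obtain ⟨hpA, x, hcx, hxp⟩ := hp
  obtain ⟨hqA, y, hcy, hyq⟩ := hq
  -- wlog via trichotomy
  have key : ∀ {i' j' : ι} {x' y' : Z}, r i' j' →
      hannerCtr A r O (hannerRudin A r O) n i' x' →
      hannerCtr A r O (hannerRudin A r O) n j' y' →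
      3 * (2⁻¹ : ℝ≥0∞) ^ n ≤ edist x' y' := by
    intro i' j' x' y' hr hcx' hcy'
    by_contra hlt
    push_neg at hlt
    have hy'A : y' ∈ A := hOA j' hcy'.1
    have : y' ∈ O i' := hcx'.2.2.1 y' hy'A hlt
    exact hcy'.2.1 i' hr this
  have hxy : 3 * (2⁻¹ : ℝ≥0∞) ^ n ≤ edist x y := by
    rcases trichotomous_of r i j with h | h | h
    · exact key h hcx hcy
    · exact absurd h hij
    · rw [edist_comm]; exact key h hcy hcx
  by_contra hlt
  push_neg at hlt
  have : edist x y < 3 * (2⁻¹ : ℝ≥0∞) ^ n := by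
    calc edist x y ≤ edist x p + edist p q + edist q y := edist_triangle4 _ _ _ _
    _ < (2⁻¹ : ℝ≥0∞) ^ n + (2⁻¹ : ℝ≥0∞) ^ n + (2⁻¹ : ℝ≥0∞) ^ n := by
        have hfin : (2⁻¹ : ℝ≥0∞) ^ n ≠ ⊤ := by
          exact pow_ne_top (by norm_num)
        have h1 : edist q y < (2⁻¹ : ℝ≥0∞) ^ n := by rwa [edist_comm]
        exact ENNReal.add_lt_add (ENNReal.add_lt_add hxp hlt) h1
    _ = 3 * (2⁻¹ : ℝ≥0∞) ^ n := by ring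
  exact absurd hxy (not_le.2 this)

theorem hannerRudin_cover (A : Set Z) (r : ι → ι → Prop) (hwf : WellFounded r)
    (O : ι → Set Z)
    (hker : ∀ i, ∀ a ∈ O i, ∃ ε : ℝ≥0∞, 0 < ε ∧ ∀ y ∈ A, edist a y < ε → y ∈ O i)
    (hcov : A ⊆ ⋃ i, O i) (a : Z) (ha : a ∈ A) :
    ∃ n i, a ∈ hannerRudin A r O n i := by
  have hne : {i | a ∈ O i}.Nonempty := by
    obtain ⟨i, hi⟩ := Set.mem_iUnion.1 (hcov ha)
    exact ⟨i, hi⟩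
  set i₀ := hwf.min {i | a ∈ O i} hne with hi₀def
  have hai₀ : a ∈ O i₀ := hwf.min_mem _ hne
  have hmin : ∀ j, r j i₀ → a ∉ O j := by
    intro j hj haj
    exact hwf.not_lt_min _ haj hj
  obtain ⟨ε, hε, hball⟩ := hker i₀ a hai₀
  have hε3 : ε / 3 ≠ 0 := by
    simp only [ne_eq, ENNReal.div_eq_zero_iff, not_or]
    exact ⟨hε.ne', by norm_num⟩
  obtain ⟨k, hk⟩ := ENNReal.exists_inv_two_pow_lt hε3
  have h3k : 3 * (2⁻¹ : ℝ≥0∞) ^ k < ε := by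
    calc 3 * (2⁻¹ : ℝ≥0∞) ^ k < 3 * (ε / 3) := by
          refine ENNReal.mul_lt_mul_iff_right (by norm_num) (by norm_num) |>.2 hk
    _ ≤ ε := ENNReal.mul_div_le
  by_cases hearly : ∃ m, m < k ∧ ∃ j, a ∈ hannerRudin A r O m j
  · obtain ⟨m, _, j, hm⟩ := hearly
    exact ⟨m, j, hm⟩
  · push_neg at hearly
    refine ⟨k, i₀, ?_⟩
    rw [hannerRudin_def]
    refine ⟨ha, a, ⟨hai₀, hmin, ?_, ?_⟩, ?_⟩
    · intro y hy hd
      exact hball y hy (lt_trans hd h3k)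
    · intro m hm j
      exact hearly m hm j
    · simp only [edist_self]
      exact ENNReal.pow_pos (by norm_num) k

end Rudin

section Rudin2
variable {Z : Type u} [PseudoEMetricSpace Z] {ι : Type w}

theorem hannerRudin_open (A : Set Z) (r : ι → ι → Prop) (O : ι → Set Z) (n : ℕ) (i : ι) :
    ∃ V : Set Z, IsOpen V ∧ hannerRudin A r O n i = A ∩ V := by
  refine ⟨⋃ x ∈ {x | hannerCtr A r O (hannerRudin A r O) n i x}, Metric.eball x ((2⁻¹ : ℝ≥0∞) ^ n), ?_, ?_⟩
  · exact isOpen_biUnion fun x _ => EMetric.isOpen_ball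
  · rw [hannerRudin_def]
    ext y
    simp only [Set.mem_setOf_eq, Set.mem_inter_iff, Set.mem_iUnion, Metric.mem_eball]
    constructor
    · rintro ⟨hyA, x, hc, hd⟩
      exact ⟨hyA, x, hc, by rwa [edist_comm]⟩
    · rintro ⟨hyA, x, hc, hd⟩
      exact ⟨hyA, x, hc, by rwa [edist_comm]⟩

end Rudin2

section StagesSig

variable {X : Type v} [TopologicalSpace X] {ι : Type w}

theorem hannerStages (U : ι → Set X)
    (hopen : ∀ i, IsOpen (U i)) (hcov : (⋃ i, U i) = Set.univ)
    {Z : Type u} [MetricSpace Z] (A : Set Z) (hA : IsClosed A)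
    (f : Z → X) (hf : ContinuousOn f A) :
    ∃ (C D O' : ℕ → Set Z) (T : ℕ → ι → Set Z),
      (∀ s, IsClosed (C s)) ∧ (∀ s, IsClosed (D s)) ∧ (∀ s, C s ⊆ D s) ∧ (∀ s, D s ⊆ A) ∧
      (∀ s, IsOpen (O' s)) ∧ (∀ s, C s ⊆ O' s) ∧ (∀ s, A ∩ O' s ⊆ D s) ∧
      (∀ s i, IsOpen (T s i)) ∧
      (∀ s i j, i ≠ j → ∀ z, z ∈ T s i → z ∈ T s j → False) ∧
      (∀ s, D s ⊆ ⋃ i, T s i) ∧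
      (∀ s i, ∀ z ∈ D s ∩ T s i, f z ∈ U i) ∧
      A ⊆ ⋃ s, C s := by
  set r : ι → ι → Prop := WellOrderingRel with hr
  haveI : IsWellOrder ι r := WellOrderingRel.isWellOrder
  have hwf : WellFounded r := IsWellFounded.wf
  set O : ι → Set Z := fun i => A ∩ f ⁻¹' (U i) with hO
  have hOA : ∀ i, O i ⊆ A := fun i => Set.inter_subset_left
  have hker : ∀ i, ∀ a ∈ O i, ∃ ε : ℝ≥0∞, 0 < ε ∧ ∀ y ∈ A, edist a y < ε → y ∈ O i := by
    intro i a ha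
    have h1 : f ⁻¹' (U i) ∈ 𝓝[A] a := hf a ha.1 ((hopen i).mem_nhds ha.2)
    obtain ⟨V, hVopen, haV, hVsub⟩ := mem_nhdsWithin.1 h1
    obtain ⟨ε, hε, hball⟩ := EMetric.isOpen_iff.1 hVopen a haV
    refine ⟨ε, hε, fun y hy hd => ⟨hy, hVsub ⟨hball ?_, hy⟩⟩⟩
    rwa [EMetric.mem_ball, edist_comm]
  have hOcov : A ⊆ ⋃ i, O i := by
    intro a ha
    have h2 : f a ∈ ⋃ i, U i := by rw [hcov]; trivial
    obtain ⟨i, hi⟩ := Set.mem_iUnion.1 h2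
    exact Set.mem_iUnion.2 ⟨i, ha, hi⟩
  set R : ℕ → ι → Set Z := hannerRudin A r O with hRdef
  set e : ℕ ≃ ℕ × ℕ := (Denumerable.eqv (ℕ × ℕ)).symm with he
  -- helper pow facts
  have hpow_pos : ∀ k : ℕ, (0 : ℝ≥0∞) < (2⁻¹ : ℝ≥0∞) ^ k :=
    fun k => ENNReal.pow_pos (by norm_num) k
  have hpow_le : ∀ {k l : ℕ}, k ≤ l → (2⁻¹ : ℝ≥0∞) ^ l ≤ (2⁻¹ : ℝ≥0∞) ^ k :=
    fun {k l} h => pow_le_pow_right_of_le_one' (by norm_num) h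
  have hpow_lt : ∀ k : ℕ, (2⁻¹ : ℝ≥0∞) ^ (k + 1) < (2⁻¹ : ℝ≥0∞) ^ k := by
    intro k
    rw [pow_succ]
    calc (2⁻¹ : ℝ≥0∞) ^ k * 2⁻¹ < (2⁻¹ : ℝ≥0∞) ^ k * 1 :=
          (ENNReal.mul_lt_mul_iff_right (hpow_pos k).ne' (pow_ne_top (by norm_num))).2 (by norm_num)
    _ = (2⁻¹ : ℝ≥0∞) ^ k := mul_one _
  -- the sets
  set Ph : ℕ → ι → Set Z := fun s i =>
    A ∩ {z | (2⁻¹ : ℝ≥0∞) ^ ((e s).1 + (e s).2 + 1) ≤ infEdist z (A \ R (e s).1 i)} with hPh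
  set Pc : ℕ → ι → Set Z := fun s i =>
    A ∩ {z | (2⁻¹ : ℝ≥0∞) ^ ((e s).1 + (e s).2) ≤ infEdist z (A \ R (e s).1 i)} with hPc
  set C : ℕ → Set Z := fun s => ⋃ i, Pc s i with hC
  set D : ℕ → Set Z := fun s => ⋃ i, Ph s i with hD
  set W : ℕ → Set Z := fun n => ⋃ i, R n i with hW
  set O' : ℕ → Set Z := fun s =>
    {z | (2⁻¹ : ℝ≥0∞) ^ ((e s).1 + (e s).2 + 1) < infEdist z (A \ W (e s).1)} with hO'
  set T : ℕ → ι → Set Z := fun s i =>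
    {z | infEdist z (Ph s i) < (2⁻¹ : ℝ≥0∞) ^ ((e s).1 + 2)} with hT
  -- pieces facts
  have hPcPh : ∀ s i, Pc s i ⊆ Ph s i := by
    intro s i z hz
    exact ⟨hz.1, le_trans (hpow_le (Nat.le_succ _)) hz.2⟩
  have hPhR : ∀ s i, Ph s i ⊆ R (e s).1 i := by
    intro s i z hz
    have hzero : infEdist z (A \ R (e s).1 i) ≠ 0 :=
      fun h0 => absurd (le_trans hz.2 h0.le) (not_le.2 (hpow_pos _))
    have hnc : z ∉ closure (A \ R (e s).1 i) := by
      rw [mem_closure_iff_infEdist_zero]; exact hzero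
    have : z ∉ A \ R (e s).1 i := fun h => hnc (subset_closure h)
    by_contra hzR
    exact this ⟨hz.1, hzR⟩
  have hsepPh : ∀ s i j, i ≠ j → ∀ p ∈ Ph s i, ∀ q ∈ Ph s j,
      (2⁻¹ : ℝ≥0∞) ^ (e s).1 ≤ edist p q := by
    intro s i j hij p hp q hq
    exact hannerRudin_sep A r O hOA (e s).1 hij (hPhR s i hp) (hPhR s j hq)
  have hPhclosed : ∀ s i, IsClosed (Ph s i) :=
    fun s i => hA.inter (isClosed_le continuous_const continuous_infEdist)
  have hPcclosed : ∀ s i, IsClosed (Pc s i) :=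
    fun s i => hA.inter (isClosed_le continuous_const continuous_infEdist)
  refine ⟨C, D, O', T, ?_, ?_, ?_, ?_, ?_, ?_, ?_, ?_, ?_, ?_, ?_, ?_⟩
  · -- C closed
    intro s
    refine hanner_isClosed_iUnion_sep (hpow_pos (e s).1) (hPcclosed s) ?_
    intro i j hij x hx y hy
    exact hsepPh s i j hij x (hPcPh s i hx) y (hPcPh s j hy)
  · -- D closed
    intro s
    refine hanner_isClosed_iUnion_sep (hpow_pos (e s).1) (hPhclosed s) ?_
    intro i j hij x hx y hy
    exact hsepPh s i j hij x hx y hy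
  · -- C ⊆ D
    intro s z hz
    obtain ⟨i, hi⟩ := Set.mem_iUnion.1 hz
    exact Set.mem_iUnion.2 ⟨i, hPcPh s i hi⟩
  · -- D ⊆ A
    intro s z hz
    obtain ⟨i, hi⟩ := Set.mem_iUnion.1 hz
    exact hi.1
  · -- O' open
    intro s
    exact isOpen_lt continuous_const continuous_infEdist
  · -- C ⊆ O'
    intro s z hz
    obtain ⟨i, hi⟩ := Set.mem_iUnion.1 hz
    have h1 : infEdist z (A \ R (e s).1 i) ≤ infEdist z (A \ W (e s).1) :=
      infEdist_anti (Set.diff_subset_diff_right (Set.subset_iUnion _ i))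
    exact lt_of_lt_of_le (lt_of_lt_of_le (hpow_lt _) hi.2) h1
  · -- A ∩ O' ⊆ D
    intro s z hz
    obtain ⟨hzA, hzO⟩ := hz
    have hzW : z ∈ W (e s).1 := by
      by_contra hzw
      have hzO' : (2⁻¹ : ℝ≥0∞) ^ ((e s).1 + (e s).2 + 1) < infEdist z (A \ W (e s).1) := hzO
      rw [infEdist, infEdist_zero_of_mem ((Set.mem_diff z).2 ⟨hzA, hzw⟩)] at hzO'
      exact absurd hzO' (not_lt.2 zero_le)
    obtain ⟨i₀, hi₀⟩ := Set.mem_iUnion.1 hzW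
    refine Set.mem_iUnion.2 ⟨i₀, hzA, ?_⟩
    show (2⁻¹ : ℝ≥0∞) ^ ((e s).1 + (e s).2 + 1) ≤ infEdist z (A \ R (e s).1 i₀)
    rw [infEdist, le_infEdist]
    intro y hy
    by_cases hyW : y ∈ W (e s).1
    · obtain ⟨j, hj⟩ := Set.mem_iUnion.1 hyW
      have hij : i₀ ≠ j := by
        rintro rfl
        exact hy.2 hj
      calc (2⁻¹ : ℝ≥0∞) ^ ((e s).1 + (e s).2 + 1) ≤ (2⁻¹ : ℝ≥0∞) ^ (e s).1 :=
            hpow_le (by omega)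
      _ ≤ edist z y := hannerRudin_sep A r O hOA (e s).1 hij hi₀ hj
    · calc (2⁻¹ : ℝ≥0∞) ^ ((e s).1 + (e s).2 + 1) ≤ infEdist z (A \ W (e s).1) := hzO.le
      _ ≤ edist z y := infEdist_le_edist_of_mem ⟨hy.1, hyW⟩
  · -- T open
    intro s i
    exact isOpen_lt continuous_infEdist continuous_const
  · -- T disjoint
    intro s i j hij z hzi hzj
    obtain ⟨x, hx, hzx⟩ := infEdist_lt_iff.1 hzi
    obtain ⟨y, hy, hzy⟩ := infEdist_lt_iff.1 hzj
    have h1 : (2⁻¹ : ℝ≥0∞) ^ (e s).1 ≤ edist x y := hsepPh s i j hij x hx y hy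
    have h2 : edist x y < (2⁻¹ : ℝ≥0∞) ^ ((e s).1 + 1) := by
      calc edist x y ≤ edist x z + edist z y := edist_triangle _ _ _
      _ < (2⁻¹ : ℝ≥0∞) ^ ((e s).1 + 2) + (2⁻¹ : ℝ≥0∞) ^ ((e s).1 + 2) :=
          ENNReal.add_lt_add (by rwa [edist_comm]) hzy
      _ = (2⁻¹ : ℝ≥0∞) ^ ((e s).1 + 1) * (2⁻¹ + 2⁻¹) := by ring
      _ = (2⁻¹ : ℝ≥0∞) ^ ((e s).1 + 1) := by
          rw [ENNReal.inv_two_add_inv_two, mul_one]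
    exact absurd h1 (not_le.2 (lt_of_lt_of_le h2 (hpow_le (Nat.le_succ _))))
  · -- D ⊆ ⋃ T
    intro s z hz
    obtain ⟨i, hi⟩ := Set.mem_iUnion.1 hz
    refine Set.mem_iUnion.2 ⟨i, ?_⟩
    show infEdist z (Ph s i) < _
    rw [infEdist, infEdist_zero_of_mem hi]
    exact hpow_pos _
  · -- image condition
    intro s i z hz
    obtain ⟨hzD, hzT⟩ := hz
    obtain ⟨j, hj⟩ := Set.mem_iUnion.1 hzD
    have hji : j = i := by
      by_contra hne
      obtain ⟨x, hx, hzx⟩ := infEdist_lt_iff.1 hzT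
      have h1 : (2⁻¹ : ℝ≥0∞) ^ (e s).1 ≤ edist z x := hsepPh s j i hne z hj x hx
      exact absurd h1 (not_le.2 (lt_of_lt_of_le hzx (hpow_le (by omega))))
    subst hji
    have : z ∈ O j := hannerRudin_subset A r O (e s).1 j (hPhR s j hj)
    exact this.2
  · -- coverage
    intro a ha
    obtain ⟨n, i, hni⟩ := hannerRudin_cover A r hwf O hker hOcov a ha
    obtain ⟨V, hVopen, hVeq⟩ := hannerRudin_open A r O n i
    have hclosed : IsClosed (A \ R n i) := by
      rw [show R n i = A ∩ V from hVeq]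
      have : A \ (A ∩ V) = A ∩ Vᶜ := by ext x; simp only [Set.mem_diff, Set.mem_inter_iff, Set.mem_compl_iff]; tauto
      rw [this]
      exact hA.inter hVopen.isClosed_compl
    have hnz : infEdist a (A \ R n i) ≠ 0 := by
      intro h0
      have : a ∈ closure (A \ R n i) := mem_closure_iff_infEdist_zero.2 h0
      rw [hclosed.closure_eq] at this
      exact this.2 hni
    obtain ⟨k, hk⟩ := ENNReal.exists_inv_two_pow_lt hnz
    set s := e.symm (n, k) with hs
    have hes : e s = (n, k) := by rw [hs, Equiv.apply_symm_apply]
    refine Set.mem_iUnion.2 ⟨s, Set.mem_iUnion.2 ⟨i, ha, ?_⟩⟩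
    show (2⁻¹ : ℝ≥0∞) ^ ((e s).1 + (e s).2) ≤ infEdist a (A \ R (e s).1 i)
    rw [hes]
    exact le_trans (hpow_le (by omega)) hk.le

end StagesSig

theorem hannerMachine {X : Type v} [TopologicalSpace X] [Nonempty X] {ι : Type w}
    (U : ι → Set X) (hANE : ∀ i, IsANE.{u} (U i))
    {Z : Type u} [MetricSpace Z]
    (Y E : Set Z) (hE : IsClosed E) (hEY : E ⊆ Y)
    (T : ι → Set Z) (hT : ∀ i, IsOpen (T i))
    (hdisj : ∀ i j, i ≠ j → ∀ z, z ∈ T i → z ∈ T j → False)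
    (hET : E ⊆ ⋃ i, T i) (φ : Z → X) (hφ : ContinuousOn φ E)
    (himg : ∀ i, ∀ z ∈ E ∩ T i, φ z ∈ U i) :
    ∃ Ω : Set Z, IsOpen Ω ∧ Ω ⊆ ⋃ i, T i ∧ E ⊆ Y ∩ Ω ∧
      ∃ ψ : Z → X, ContinuousOn ψ (Y ∩ Ω) ∧ Set.EqOn ψ φ E := by
  have H : ∀ i, ∃ (Ωi : Set Z) (gi : Z → X), IsOpen Ωi ∧ E ∩ T i ⊆ Ωi ∧
      ContinuousOn gi (Y ∩ T i ∩ Ωi) ∧ Set.EqOn gi φ (E ∩ T i) := by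
    intro i
    set S : Set Z := Y ∩ T i with hS
    have hES : E ∩ T i ⊆ S := fun z hz => ⟨hEY hz.1, hz.2⟩
    set A' : Set ↥S := Subtype.val ⁻¹' E with hA'
    have hA'closed : IsClosed A' := hE.preimage continuous_subtype_val
    set g : ↥A' → ↥(U i) := fun a => ⟨φ a.1.1, himg i a.1.1 ⟨a.2, a.1.2.2⟩⟩ with hg
    have hgc : Continuous g := by
      refine Continuous.subtype_mk ?_ _
      have h1 : Continuous (fun a : ↥A' => (⟨a.1.1, a.2⟩ : ↥E)) :=
        Continuous.subtype_mk (continuous_subtype_val.comp continuous_subtype_val) _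
      exact (continuousOn_iff_continuous_restrict.1 hφ).comp h1
    obtain ⟨V, hVopen, hA'V, G, hGc, hGext⟩ := hANE i ↥S A' hA'closed g hgc
    obtain ⟨Ω₀, hΩ₀open, hΩ₀pre⟩ := isOpen_induced_iff.1 hVopen
    have hmem : ∀ (z : Z) (h : z ∈ S ∧ z ∈ Ω₀), (⟨z, h.1⟩ : ↥S) ∈ V := by
      intro z h
      rw [← hΩ₀pre]
      exact h.2
    set gi : Z → X := fun z =>
      if h : z ∈ S ∧ z ∈ Ω₀ then (G ⟨⟨z, h.1⟩, hmem z h⟩ : X) else Classical.arbitrary X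
      with hgi
    have hsub : E ∩ T i ⊆ Ω₀ := by
      intro z hz
      have hzA' : (⟨z, hES hz⟩ : ↥S) ∈ A' := hz.1
      have := hA'V hzA'
      rw [← hΩ₀pre] at this
      exact this
    refine ⟨Ω₀, gi, hΩ₀open, hsub, ?_, ?_⟩
    · rw [continuousOn_iff_continuous_restrict]
      have hres : Set.domRestrict (Y ∩ T i ∩ Ω₀) gi = fun p =>
          (G ⟨⟨p.1, p.2.1⟩, hmem p.1 ⟨p.2.1, p.2.2⟩⟩ : X) := by
        funext p
        exact dif_pos ⟨p.2.1, p.2.2⟩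
      rw [hres]
      have hj : Continuous (fun p : ↥(Y ∩ T i ∩ Ω₀) =>
          (⟨⟨p.1, p.2.1⟩, hmem p.1 ⟨p.2.1, p.2.2⟩⟩ : ↥V)) :=
        Continuous.subtype_mk (Continuous.subtype_mk continuous_subtype_val _) _
      exact continuous_subtype_val.comp (hGc.comp hj)
    · intro z hz
      have h : z ∈ S ∧ z ∈ Ω₀ := ⟨hES hz, hsub hz⟩
      have h1 : gi z = (G ⟨⟨z, h.1⟩, hmem z h⟩ : X) := dif_pos h
      have h2 : (⟨⟨z, h.1⟩, hmem z h⟩ : ↥V) =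
          ⟨⟨z, hES hz⟩, hA'V (show (⟨z, hES hz⟩ : ↥S) ∈ A' from hz.1)⟩ :=
        Subtype.ext (Subtype.ext rfl)
      rw [h1, h2, hGext ⟨⟨z, hES hz⟩, hz.1⟩]
  choose Ωf gf hΩfopen hΩfsub hgfc hgfeq using H
  set Ω : Set Z := ⋃ i, T i ∩ Ωf i with hΩ
  have hΩopen : IsOpen Ω := isOpen_iUnion fun i => (hT i).inter (hΩfopen i)
  have hΩT : Ω ⊆ ⋃ i, T i := Set.iUnion_mono fun i => Set.inter_subset_left
  have hEΩ : E ⊆ Y ∩ Ω := by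
    intro z hz
    obtain ⟨i, hi⟩ := Set.mem_iUnion.1 (hET hz)
    exact ⟨hEY hz, Set.mem_iUnion.2 ⟨i, hi, hΩfsub i ⟨hz, hi⟩⟩⟩
  set ψ : Z → X := fun z =>
    if h : ∃ i, z ∈ T i ∩ Ωf i then gf h.choose z else Classical.arbitrary X with hψ
  have hψeq : ∀ i, ∀ z ∈ (Y ∩ Ω) ∩ (T i ∩ Ωf i), ψ z = gf i z := by
    intro i z hz
    have h : ∃ j, z ∈ T j ∩ Ωf j := ⟨i, hz.2⟩
    have hji : h.choose = i := by
      by_contra hne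
      exact hdisj h.choose i hne z h.choose_spec.1 hz.2.1
    show (if h : ∃ i, z ∈ T i ∩ Ωf i then gf h.choose z else Classical.arbitrary X) = gf i z
    rw [dif_pos h, hji]
  refine ⟨Ω, hΩopen, hΩT, hEΩ, ψ, ?_, ?_⟩
  · intro z hz
    obtain ⟨i, hi⟩ := Set.mem_iUnion.1 hz.2
    have hop : IsOpen (T i ∩ Ωf i) := (hT i).inter (hΩfopen i)
    rw [ContinuousWithinAt, nhdsWithin_restrict' (Y ∩ Ω) (hop.mem_nhds hi)]
    have hcw : ContinuousWithinAt (gf i) ((Y ∩ Ω) ∩ (T i ∩ Ωf i)) z := by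
      refine (hgfc i z ⟨⟨hz.1, hi.1⟩, hi.2⟩).mono ?_
      rintro y ⟨⟨hyY, _⟩, hyT, hyΩ⟩
      exact ⟨⟨hyY, hyT⟩, hyΩ⟩
    exact hcw.congr (fun y hy => hψeq i y hy) (hψeq i z ⟨hz, hi⟩)
  · intro z hz
    obtain ⟨i, hi⟩ := Set.mem_iUnion.1 (hET hz)
    have hzm : z ∈ (Y ∩ Ω) ∩ (T i ∩ Ωf i) := ⟨hEΩ hz, hi, hΩfsub i ⟨hz, hi⟩⟩
    rw [hψeq i z hzm]
    exact hgfeq i ⟨hz, hi⟩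

theorem hannerStep {X : Type v} [TopologicalSpace X] [Nonempty X] {ι : Type w}
    (U : ι → Set X) (hUopen : ∀ i, IsOpen (U i)) (hANE : ∀ i, IsANE.{u} (U i))
    {Z : Type u} [MetricSpace Z]
    (A : Set Z) (hA : IsClosed A) (f : Z → X) (hf : ContinuousOn f A)
    (C D O' : Set Z) (hC : IsClosed C) (hD : IsClosed D) (hCD : C ⊆ D) (hDA : D ⊆ A)
    (hO'open : IsOpen O') (hCO : C ⊆ O') (hAO : A ∩ O' ⊆ D)
    (T : ι → Set Z) (hT : ∀ i, IsOpen (T i))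
    (hdisj : ∀ i j, i ≠ j → ∀ z, z ∈ T i → z ∈ T j → False)
    (hDT : D ⊆ ⋃ i, T i)
    (himg : ∀ i, ∀ z ∈ D ∩ T i, f z ∈ U i)
    (N : Set Z) (hN : IsOpen N) (K : Set Z) (hK : IsClosed K) (hKN : K ⊆ N)
    (F : Z → X) (hF : ContinuousOn F N) (hFf : Set.EqOn F f (A ∩ N)) :
    ∃ N' : Set Z, IsOpen N' ∧ K ∪ C ⊆ N' ∧ ∃ F' : Z → X, ContinuousOn F' N' ∧
      Set.EqOn F' f (A ∩ N') ∧ ∃ P : Set Z, IsOpen P ∧ K ⊆ P ∧ Set.EqOn F' F P := by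
  -- Urysohn function
  have hCN : IsClosed (C \ N) := hC.inter hN.isClosed_compl
  have hdKCN : Disjoint K (C \ N) := by
    rw [Set.disjoint_left]
    intro z hz hz2
    exact hz2.2 (hKN hz)
  obtain ⟨u, hu0, hu1, hu01⟩ := exists_continuous_zero_one_of_isClosed hK hCN hdKCN
  set Zm : Set Z := {z | u z ≤ (1/2 : ℝ)} with hZmdef
  set Zp : Set Z := {z | (1/2 : ℝ) ≤ u z} with hZpdef
  have hZm : IsClosed Zm := isClosed_le u.continuous continuous_const
  have hZp : IsClosed Zp := isClosed_le continuous_const u.continuous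
  have hZ0 : IsClosed (Zm ∩ Zp) := hZm.inter hZp
  -- the good region for F
  set R' : Set Z := ⋃ i, T i ∩ (N ∩ F ⁻¹' (U i)) with hR'def
  have hVopen : ∀ i, IsOpen (N ∩ F ⁻¹' (U i)) := fun i =>
    hF.isOpen_inter_preimage hN (hUopen i)
  have hR'open : IsOpen R' := isOpen_iUnion fun i => (hT i).inter (hVopen i)
  have hR'N : R' ⊆ N := by
    intro z hz
    obtain ⟨i, hi⟩ := Set.mem_iUnion.1 hz
    exact hi.2.1
  have hR'T : R' ⊆ ⋃ i, T i := by
    intro z hz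
    obtain ⟨i, hi⟩ := Set.mem_iUnion.1 hz
    exact Set.mem_iUnion.2 ⟨i, hi.1⟩
  -- C ∩ Z0 sits inside N and R'
  have hCZ0N : ∀ z ∈ C, z ∈ Zm ∩ Zp → z ∈ N := by
    intro z hz hz0
    by_contra hzn
    have h1 : u z = 1 := hu1 ⟨hz, hzn⟩
    have h2 : u z ≤ 1/2 := hz0.1
    rw [h1] at h2
    norm_num at h2
  have hCR : C ∩ (Zm ∩ Zp) ⊆ R' := by
    intro z hz
    have hzN : z ∈ N := hCZ0N z hz.1 hz.2
    have hzD : z ∈ D := hCD hz.1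
    obtain ⟨i, hi⟩ := Set.mem_iUnion.1 (hDT hzD)
    refine Set.mem_iUnion.2 ⟨i, hi, hzN, ?_⟩
    show F z ∈ U i
    rw [hFf ⟨hDA hzD, hzN⟩]
    exact himg i z ⟨hzD, hi⟩
  -- separate C ∩ Z0 from Z0 \ R' and build the middle collar K0
  have hd2 : Disjoint (C ∩ (Zm ∩ Zp)) ((Zm ∩ Zp) \ R') := by
    rw [Set.disjoint_left]
    intro z hz hz2
    exact hz2.2 (hCR hz)
  obtain ⟨W₁, W₂, hW₁o, hW₂o, hsub1, hsub2, hWd⟩ :=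
    NormalSpace.normal (C ∩ (Zm ∩ Zp)) ((Zm ∩ Zp) \ R')
      (hC.inter hZ0) (hZ0.inter hR'open.isClosed_compl) hd2
  set K0 : Set Z := (Zm ∩ Zp) \ W₂ with hK0def
  have hK0closed : IsClosed K0 := hZ0.inter hW₂o.isClosed_compl
  have hWK0 : (Zm ∩ Zp) ∩ W₁ ⊆ K0 := by
    intro z hz
    exact ⟨hz.1, fun hz2 => Set.disjoint_left.1 hWd hz.2 hz2⟩
  have hCK0 : C ∩ (Zm ∩ Zp) ⊆ (Zm ∩ Zp) ∩ W₁ := fun z hz => ⟨hz.2, hsub1 hz⟩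
  have hK0R' : K0 ⊆ R' := by
    intro z hz
    by_contra hzr
    exact hz.2 (hsub2 ⟨hz.1, hzr⟩)
  have hK0N : K0 ⊆ N := fun z hz => hR'N (hK0R' hz)
  -- the map to extend on the plus side
  set E : Set Z := K0 ∪ (D ∩ Zp) with hEdef
  have hEclosed : IsClosed E := hK0closed.union (hD.inter hZp)
  set φ : Z → X := fun z => if z ∈ K0 then F z else f z with hφdef
  have hφc : ContinuousOn φ E := by
    rw [hφdef]
    refine hanner_glueOn (s := E) (c₁ := K0) (c₂ := D ∩ Zp) hEdef.subset hK0closed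
      (hD.inter hZp) (hF.mono ?_) (hf.mono ?_) ?_
    · exact fun z hz => hK0N hz.2
    · exact fun z hz => hDA hz.2.1
    · intro z hz
      exact hFf ⟨hDA hz.2.1, hK0N hz.1.2⟩
  have hEZp : E ⊆ Zp := by
    rintro z (hz | hz)
    · exact hz.1.2
    · exact hz.2
  have hET : E ⊆ ⋃ i, T i := by
    rintro z (hz | hz)
    · exact hR'T (hK0R' hz)
    · exact hDT hz.1
  have himgφ : ∀ i, ∀ z ∈ E ∩ T i, φ z ∈ U i := by
    intro i z hz
    by_cases hzK : z ∈ K0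
    · have h1 : φ z = F z := if_pos hzK
      obtain ⟨j, hj⟩ := Set.mem_iUnion.1 (hK0R' hzK)
      have hji : j = i := by
        by_contra hne
        exact hdisj j i hne z hj.1 hz.2
      rw [h1]
      rw [hji] at hj
      exact hj.2.2
    · have h1 : φ z = f z := if_neg hzK
      have hzD : z ∈ D ∩ Zp := hz.1.resolve_left hzK
      rw [h1]
      exact himg i z ⟨hzD.1, hz.2⟩
  obtain ⟨Ω, hΩopen, hΩT, hEΩ, ψ, hψc, hψφ⟩ :=
    hannerMachine U hANE Zp E hEclosed hEZp T hT hdisj hET φ hφc himgφ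
  -- assemble the new neighborhood
  set Ot : Set Z := O' ∪ Aᶜ with hOtdef
  have hOtopen : IsOpen Ot := hO'open.union hA.isOpen_compl
  set Q : Set Z := ((Zm ∩ Zp) ∩ W₁ᶜ)ᶜ with hQdef
  have hQopen : IsOpen Q := (hZ0.inter hW₁o.isClosed_compl).isOpen_compl
  set N' : Set Z := (N ∩ {z | u z < 1/2}) ∪ (Ω ∩ {z | (1/2:ℝ) < u z} ∩ Ot) ∪
    (N ∩ Ω ∩ Q ∩ Ot) with hN'def
  have hN'open : IsOpen N' :=
    ((hN.inter (isOpen_lt u.continuous continuous_const)).union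
      ((hΩopen.inter (isOpen_lt continuous_const u.continuous)).inter hOtopen)).union
      (((hN.inter hΩopen).inter hQopen).inter hOtopen)
  have hKC : K ∪ C ⊆ N' := by
    rintro z (hz | hz)
    · refine Set.mem_union_left _ (Set.mem_union_left _ ⟨hKN hz, ?_⟩)
      show u z < 1/2
      rw [hu0 hz]
      norm_num
    · rcases lt_trichotomy (u z) (1/2 : ℝ) with hlt | heq | hgt
      · have hzN : z ∈ N := by
          by_contra hzn
          have := hu1 ⟨hz, hzn⟩
          rw [this] at hlt
          norm_num at hlt
        exact Set.mem_union_left _ (Set.mem_union_left _ ⟨hzN, hlt⟩)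
      · have hz0 : z ∈ Zm ∩ Zp := ⟨le_of_eq heq, le_of_eq heq.symm⟩
        have hzN : z ∈ N := hCZ0N z hz hz0
        have hzE : z ∈ E := Set.mem_union_right _ ⟨hCD hz, hz0.2⟩
        have hzΩ : z ∈ Ω := (hEΩ hzE).2
        have hzQ : z ∈ Q := by
          intro hq
          exact hq.2 (hsub1 ⟨hz, hz0⟩)
        exact Set.mem_union_right _ ⟨⟨⟨hzN, hzΩ⟩, hzQ⟩, Set.mem_union_left _ (hCO hz)⟩
      · have hzE : z ∈ E := Set.mem_union_right _ ⟨hCD hz, le_of_lt hgt⟩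
        exact Set.mem_union_left _ (Set.mem_union_right _
          ⟨⟨(hEΩ hzE).2, hgt⟩, Set.mem_union_left _ (hCO hz)⟩)
  set F' : Z → X := fun z => if z ∈ Zm then F z else ψ z with hF'def
  have hN'Zm : N' ∩ Zm ⊆ N := by
    rintro z ⟨hz, hzm⟩
    rcases hz with (⟨hz1, _⟩ | ⟨⟨_, hz2⟩, _⟩) | ⟨⟨⟨hz1, _⟩, _⟩, _⟩
    · exact hz1
    · exact absurd (show u z ≤ 1/2 from hzm) (not_le.2 (show (1/2:ℝ) < u z from hz2))
    · exact hz1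
  have hN'Zp : N' ∩ Zp ⊆ Zp ∩ Ω := by
    rintro z ⟨hz, hzp⟩
    rcases hz with (⟨_, hz2⟩ | ⟨⟨hz1, _⟩, _⟩) | ⟨⟨⟨_, hz1⟩, _⟩, _⟩
    · exact absurd (show (1/2:ℝ) ≤ u z from hzp) (not_le.2 (show u z < 1/2 from hz2))
    · exact ⟨hzp, hz1⟩
    · exact ⟨hzp, hz1⟩
  have hN'Z0K0 : N' ∩ Zm ∩ Zp ⊆ K0 := by
    rintro z ⟨⟨hz, hzm⟩, hzp⟩
    rcases hz with (⟨_, hz2⟩ | ⟨⟨_, hz2⟩, _⟩) | ⟨⟨_, hzQ⟩, _⟩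
    · exact absurd (show (1/2:ℝ) ≤ u z from hzp) (not_le.2 (show u z < 1/2 from hz2))
    · exact absurd (show u z ≤ 1/2 from hzm) (not_le.2 (show (1/2:ℝ) < u z from hz2))
    · refine hWK0 ⟨⟨hzm, hzp⟩, ?_⟩
      by_contra hzW
      exact (show z ∈ Q from hzQ) ⟨⟨hzm, hzp⟩, hzW⟩
  have hF'c : ContinuousOn F' N' := by
    rw [hF'def]
    refine hanner_glueOn (s := N') (c₁ := Zm) (c₂ := Zp) ?_ hZm hZp
      (hF.mono hN'Zm) (hψc.mono hN'Zp) ?_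
    · intro z _
      rcases le_total (u z) (1/2 : ℝ) with h | h
      · exact Set.mem_union_left _ (show z ∈ Zm from h)
      · exact Set.mem_union_right _ (show z ∈ Zp from h)
    · intro z hz
      have hzK0 : z ∈ K0 := hN'Z0K0 hz
      have h1 : ψ z = φ z := hψφ (Set.mem_union_left _ hzK0)
      have h2 : φ z = F z := if_pos hzK0
      rw [h1, h2]
  have hF'f : Set.EqOn F' f (A ∩ N') := by
    intro a ha
    by_cases hzm : a ∈ Zm
    · have h1 : F' a = F a := if_pos hzm
      rw [h1]
      exact hFf ⟨ha.1, hN'Zm ⟨ha.2, hzm⟩⟩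
    · have h1 : F' a = ψ a := if_neg hzm
      have hzp : a ∈ Zp := show (1/2:ℝ) ≤ u a from le_of_lt (lt_of_not_ge (fun hle => hzm (show a ∈ Zm from hle)))
      have haOt : a ∈ Ot := by
        rcases ha.2 with (⟨_, hz2⟩ | ⟨_, hz3⟩) | ⟨_, hz3⟩
        · exact absurd (show a ∈ Zm from le_of_lt (show u a < 1/2 from hz2)) hzm
        · exact hz3
        · exact hz3
      have haO' : a ∈ O' := by
        rcases haOt with h | h
        · exact h
        · exact absurd ha.1 h
      have haE : a ∈ E := Set.mem_union_right _ ⟨hAO ⟨ha.1, haO'⟩, hzp⟩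
      have h2 : ψ a = φ a := hψφ haE
      have h3 : φ a = f a := by
        refine if_neg ?_
        intro haK0
        exact hzm haK0.1.1
      rw [h1, h2, h3]
  refine ⟨N', hN'open, hKC, F', hF'c, hF'f, N ∩ {z | u z < 1/2},
    hN.inter (isOpen_lt u.continuous continuous_const), ?_, ?_⟩
  · intro z hz
    refine ⟨hKN hz, ?_⟩
    show u z < 1/2
    rw [hu0 hz]
    norm_num
  · intro z hz
    exact if_pos (show z ∈ Zm from le_of_lt (show u z < 1/2 from hz.2))

theorem stmt15' {X : Type v} [TopologicalSpace X] {ι : Type*} (U : ι → Set X)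
    (hopen : ∀ i, IsOpen (U i))
    (hANE : ∀ i, IsANE.{u} (U i))
    (hcover : (⋃ i, U i) = Set.univ) :
    IsANE.{u} X := by
  intro Z _tZ _mZ A hA f hfc
  letI : MetricSpace Z := TopologicalSpace.metrizableSpaceMetric Z
  rcases Set.eq_empty_or_nonempty A with rfl | hAne
  · refine ⟨∅, isOpen_empty, Set.Subset.refl _, fun p => p.2.elim, ?_, fun a => a.2.elim⟩
    rw [continuous_iff_continuousAt]
    intro p
    exact p.2.elim
  · obtain ⟨a₀, ha₀⟩ := hAne
    haveI : Nonempty X := ⟨f ⟨a₀, ha₀⟩⟩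
    set ft : Z → X := fun z => if h : z ∈ A then f ⟨z, h⟩ else Classical.arbitrary X with hftdef
    have hft : ContinuousOn ft A := by
      rw [continuousOn_iff_continuous_restrict]
      have hres : A.domRestrict ft = f := funext fun a => dif_pos a.2
      rw [hres]
      exact hfc
    obtain ⟨C, D, O', T, hCc, hDc, hCD, hDA, hO'o, hCO', hAO, hTo, hTd, hDT, himg, hcovC⟩ :=
      hannerStages U hopen hcover A hA ft hft
    -- the inductive step
    have key : ∀ (n : ℕ) (N : Set Z) (F : Z → X) (K : Set Z),
        IsOpen N → IsClosed K → K ⊆ N → ContinuousOn F N → Set.EqOn F ft (A ∩ N) →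
        ∃ (N' : Set Z) (F' : Z → X) (K' : Set Z),
          IsOpen N' ∧ IsClosed K' ∧ K' ⊆ N' ∧ ContinuousOn F' N' ∧
          Set.EqOn F' ft (A ∩ N') ∧
          K ⊆ K' ∧ C n ⊆ interior K' ∧ K ⊆ interior K' ∧ Set.EqOn F' F K := by
      intro n N F K hNo hKc hKN hFc hFft
      obtain ⟨N₁, hN₁o, hKCN₁, F₁, hF₁c, hF₁ft, P, hPo, hKP, hF₁F⟩ :=
        hannerStep U hopen hANE A hA ft hft (C n) (D n) (O' n) (hCc n) (hDc n) (hCD n)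
          (hDA n) (hO'o n) (hCO' n) (hAO n) (T n) (hTo n) (hTd n) (hDT n) (himg n)
          N hNo K hKc hKN F hFc hFft
      obtain ⟨V, hVo, hKV, hVN₁⟩ :=
        normal_exists_closure_subset (hKc.union (hCc n)) hN₁o hKCN₁
      have hVint : V ⊆ interior (closure V) := hVo.subset_interior_iff.2 subset_closure
      refine ⟨N₁, F₁, closure V, hN₁o, isClosed_closure, hVN₁, hF₁c, hF₁ft, ?_, ?_, ?_, ?_⟩
      · exact (Set.subset_union_left.trans hKV).trans subset_closure
      · exact (Set.subset_union_right.trans hKV).trans hVint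
      · exact (Set.subset_union_left.trans hKV).trans hVint
      · exact fun z hz => hF₁F (hKP hz)
    -- build the sequence of states
    set St := {q : ℕ × Set Z × (Z → X) × Set Z //
      IsOpen q.2.1 ∧ IsClosed q.2.2.2 ∧ q.2.2.2 ⊆ q.2.1 ∧ ContinuousOn q.2.2.1 q.2.1 ∧
        Set.EqOn q.2.2.1 ft (A ∩ q.2.1)} with hStdef
    have key' : ∀ q : St, ∃ q' : St,
        q'.1.1 = q.1.1 + 1 ∧ q.1.2.2.2 ⊆ q'.1.2.2.2 ∧ C q.1.1 ⊆ interior q'.1.2.2.2 ∧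
        q.1.2.2.2 ⊆ interior q'.1.2.2.2 ∧ Set.EqOn q'.1.2.2.1 q.1.2.2.1 q.1.2.2.2 := by
      rintro ⟨⟨n, N, F, K⟩, hNo, hKc, hKN, hFc, hFft⟩
      obtain ⟨N', F', K', hN'o, hK'c, hK'N', hF'c, hF'ft, hKK', hCint, hKint, hF'F⟩ :=
        key n N F K hNo hKc hKN hFc hFft
      exact ⟨⟨(n + 1, N', F', K'), hN'o, hK'c, hK'N', hF'c, hF'ft⟩,
        rfl, hKK', hCint, hKint, hF'F⟩
    choose g hg1 hg2 hg3 hg4 hg5 using key'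
    set q0 : St := ⟨(0, ∅, ft, ∅), isOpen_empty, isClosed_empty, Set.empty_subset _,
      continuousOn_empty ft, by intro z hz; exact absurd hz.2 (Set.notMem_empty z)⟩ with hq0
    set seq : ℕ → St := fun n => g^[n] q0 with hseq
    have hseqsucc : ∀ n, seq (n + 1) = g (seq n) := by
      intro n
      rw [hseq]
      exact Function.iterate_succ_apply' g n q0
    have hidx : ∀ n, (seq n).1.1 = n := by
      intro n
      induction n with
      | zero => rfl
      | succ n ih => rw [hseqsucc n, hg1 (seq n), ih]
    set Nn : ℕ → Set Z := fun n => (seq n).1.2.1 with hNn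
    set Fn : ℕ → Z → X := fun n => (seq n).1.2.2.1 with hFn
    set Kn : ℕ → Set Z := fun n => (seq n).1.2.2.2 with hKn
    have hNno : ∀ n, IsOpen (Nn n) := fun n => (seq n).2.1
    have hKnNn : ∀ n, Kn n ⊆ Nn n := fun n => (seq n).2.2.2.1
    have hFnc : ∀ n, ContinuousOn (Fn n) (Nn n) := fun n => (seq n).2.2.2.2.1
    have hFnft : ∀ n, Set.EqOn (Fn n) ft (A ∩ Nn n) := fun n => (seq n).2.2.2.2.2
    have hKmono : ∀ n, Kn n ⊆ Kn (n + 1) := by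
      intro n
      have := hg2 (seq n)
      rw [← hseqsucc n] at this
      exact this
    have hCint : ∀ n, C n ⊆ interior (Kn (n + 1)) := by
      intro n
      have := hg3 (seq n)
      rw [← hseqsucc n, hidx n] at this
      exact this
    have hFeq : ∀ n, Set.EqOn (Fn (n + 1)) (Fn n) (Kn n) := by
      intro n
      have := hg5 (seq n)
      rw [← hseqsucc n] at this
      exact this
    have hKmono' : ∀ m n, m ≤ n → Kn m ⊆ Kn n := by
      intro m n hmn
      induction n with
      | zero => rw [Nat.le_zero.1 hmn]
      | succ n ih =>
        rcases Nat.lt_or_ge m (n + 1) with h | h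
        · exact (ih (Nat.lt_succ_iff.1 h)).trans (hKmono n)
        · rw [Nat.le_antisymm hmn h]
    have hFeq' : ∀ m n, m ≤ n → Set.EqOn (Fn n) (Fn m) (Kn m) := by
      intro m n hmn
      induction n with
      | zero => rw [Nat.le_zero.1 hmn]; exact fun z _ => rfl
      | succ n ih =>
        rcases Nat.lt_or_ge m (n + 1) with h | h
        · intro z hz
          have h1 : Fn (n + 1) z = Fn n z := hFeq n (hKmono' m n (Nat.lt_succ_iff.1 h) hz)
          rw [h1]
          exact ih (Nat.lt_succ_iff.1 h) hz
        · rw [Nat.le_antisymm hmn h]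
          exact fun z _ => rfl
    -- the limit
    set Nf : Set Z := ⋃ n, interior (Kn n) with hNf
    have hNfo : IsOpen Nf := isOpen_iUnion fun n => isOpen_interior
    have hANf : A ⊆ Nf := by
      intro a ha
      obtain ⟨s, hs⟩ := Set.mem_iUnion.1 (hcovC ha)
      exact Set.mem_iUnion.2 ⟨s + 1, hCint s hs⟩
    set Ff : Z → X := fun z =>
      if h : ∃ n, z ∈ interior (Kn n) then Fn (Nat.find h) z else Classical.arbitrary X
      with hFf
    have hFfn : ∀ n, Set.EqOn Ff (Fn n) (interior (Kn n)) := by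
      intro n z hz
      have h : ∃ m, z ∈ interior (Kn m) := ⟨n, hz⟩
      have h1 : Ff z = Fn (Nat.find h) z := dif_pos h
      have hn₀ : z ∈ Kn (Nat.find h) := interior_subset (Nat.find_spec h)
      have hzn : z ∈ Kn n := interior_subset hz
      rw [h1]
      rcases le_total (Nat.find h) n with hle | hle
      · exact (hFeq' (Nat.find h) n hle hn₀).symm ▸ (hFeq' (Nat.find h) n hle hn₀).symm
      · exact hFeq' n (Nat.find h) hle hzn
    have hFfc : ContinuousOn Ff Nf := by
      intro z hz
      obtain ⟨n, hn⟩ := Set.mem_iUnion.1 hz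
      rw [ContinuousWithinAt, nhdsWithin_restrict' Nf (isOpen_interior.mem_nhds hn)]
      have hcw : ContinuousWithinAt (Fn n) (Nf ∩ interior (Kn n)) z := by
        refine (hFnc n z (hKnNn n (interior_subset hn))).mono ?_
        exact fun y hy => hKnNn n (interior_subset hy.2)
      exact hcw.congr (fun y hy => hFfn n hy.2) (hFfn n hn)
    have hFfft : Set.EqOn Ff ft (A ∩ Nf) := by
      intro a ha
      obtain ⟨n, hn⟩ := Set.mem_iUnion.1 ha.2
      rw [hFfn n hn]
      exact hFnft n ⟨ha.1, hKnNn n (interior_subset hn)⟩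
    refine ⟨Nf, hNfo, hANf, fun p => Ff p.1, ?_, ?_⟩
    · exact continuousOn_iff_continuous_restrict.1 hFfc
    · intro a
      show Ff (a : Z) = f a
      have h1 : Ff (a : Z) = ft (a : Z) := hFfft ⟨a.2, hANf a.2⟩
      rw [h1]
      exact dif_pos a.2

/-- Hanner's open union theorem: if a space `X` is the union of a
family of open subsets each of which is an ANE for metrizable spaces, then `X` is
an ANE for metrizable spaces. -/
theorem stmt15 {X : Type v} [TopologicalSpace X] {ι : Type*} (U : ι → Set X)
    (hopen : ∀ i, IsOpen (U i))
    (hANE : ∀ i, IsANE.{u} (U i))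
    (hcover : (⋃ i, U i) = Set.univ) :
    IsANE.{u} X := by
  exact stmt15' U hopen hANE hcover
end
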